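/- arXiv:1404.4742 — 2 statements merged into one kernel-verified Lean document; each statement's English description precedes it below -/
import Mathlib

section
/- Let Γ be a finite-dimensional algebra over a field K that is 1-Gorenstein (i.e. the injective dimensions of Γ as a left module over itself and as a right module over itself are both at most 1). Then a finitely generated Γ-module M is Gorenstein projective if and only if M is torsionless, i.e. M embeds into a finitely generated projective Γ-module. -/
open CategoryTheory

/-- The injective dimension of the `R`-module `M` is at most `n`:
there is an injective coresolution `0 → M → I⁰ → I¹ → ⋯ → Iⁿ → 0`. -/
def injDimLE (R : Type) [Ring R] (M : Type) [AddCommGroup M] [Module R M] (n : ℕ) : Prop :=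
  ∃ (I : ℕ → ModuleCat.{0} R) (f : M →ₗ[R] I 0) (d : ∀ k, I k ⟶ I (k + 1)),
    (∀ k, Module.Injective R (I k)) ∧
    Function.Injective f ∧
    LinearMap.range f = LinearMap.ker (d 0).hom ∧
    (∀ k, LinearMap.range (d k).hom = LinearMap.ker (d (k + 1)).hom) ∧
    (∀ k, n ≤ k → Subsingleton (I (k + 1)))

/-- `G` is a Gorenstein projective `Γ`-module: there is an exact complex
`⋯ → P⁻¹ → P⁰ → P¹ → ⋯` of finitely generated projective modules which stays exact
under `Hom_Γ(-,Γ)`, with `G ≅ Ker (P⁰ → P¹)`. -/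
def IsGorensteinProjective (Γ : Type) [Ring Γ] (G : Type) [AddCommGroup G] [Module Γ G] : Prop :=
  ∃ (P : ℤ → ModuleCat.{0} Γ) (d : ∀ i, P i ⟶ P (i + 1)),
    (∀ i, Module.Finite Γ (P i)) ∧
    (∀ i, Module.Projective Γ (P i)) ∧
    (∀ i, LinearMap.range (d i).hom = LinearMap.ker (d (i + 1)).hom) ∧
    (∀ (i : ℤ) (f : P (i + 1) →ₗ[Γ] Γ), f.comp (d i).hom = 0 →
      ∃ g : P (i + 1 + 1) →ₗ[Γ] Γ, g.comp (d (i + 1)).hom = f) ∧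
    Nonempty (G ≃ₗ[Γ] LinearMap.ker (d 0).hom)

/-- `M` is torsionless: it embeds into a finitely generated projective module. -/
def IsTorsionless (Γ : Type) [Ring Γ] (M : Type) [AddCommGroup M] [Module Γ M] : Prop :=
  ∃ (P : ModuleCat.{0} Γ), Module.Finite Γ P ∧ Module.Projective Γ P ∧
    ∃ f : M →ₗ[Γ] P, Function.Injective f

section Tools
variable {R : Type} [Ring R]

lemma isTorsionless_of_injective {X Y : Type} [AddCommGroup X] [Module R X]
    [AddCommGroup Y] [Module R Y] (h : IsTorsionless R Y) (f : X →ₗ[R] Y)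
    (hf : Function.Injective f) : IsTorsionless R X := by
  obtain ⟨P, h1, h2, g, hg⟩ := h
  exact ⟨P, h1, h2, g ∘ₗ f, hg.comp hf⟩

lemma isTorsionless_free (n : ℕ) : IsTorsionless R (Fin n → R) :=
  ⟨ModuleCat.of R (Fin n → R), inferInstanceAs (Module.Finite R (Fin n → R)),
    inferInstanceAs (Module.Projective R (Fin n → R)), LinearMap.id, fun _ _ h => h⟩

/-- The key extension lemma: if `inj.dim R ≤ 1` and `B/A` is torsionless, then every
functional on `A` extends to `B`. -/
lemma extension_lemma (hR : injDimLE R R 1) {B : Type} [AddCommGroup B] [Module R B]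
    (A : Submodule R B) (hq : IsTorsionless R (B ⧸ A)) (φ : A →ₗ[R] R) :
    ∃ ψ : B →ₗ[R] R, ∀ a : A, ψ (a : B) = φ a := by
  obtain ⟨I, f₀, d, hinj, hf₀, hex0, hex, hvan⟩ := hR
  haveI hI2 : Subsingleton (I (1 + 1)) := hvan 1 le_rfl
  have hsurj : Function.Surjective (d 0).hom := by
    rw [← LinearMap.range_eq_top, hex 0, LinearMap.ker_eq_top.2 (Subsingleton.elim _ _)]
  haveI := hinj 0
  haveI := hinj 1
  obtain ⟨ψ₀, hψ₀⟩ := Module.Injective.out A.subtype A.injective_subtype (f₀ ∘ₗ φ)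
  set χbar : B →ₗ[R] I 1 := (d 0).hom ∘ₗ ψ₀ with hχbar
  have hA : A ≤ LinearMap.ker χbar := by
    intro a ha
    have : ψ₀ a = f₀ (φ ⟨a, ha⟩) := hψ₀ ⟨a, ha⟩
    have hm : ψ₀ a ∈ LinearMap.ker (d 0).hom := by
      rw [← hex0, this]; exact LinearMap.mem_range_self _ _
    simpa [χbar] using hm
  set χ : (B ⧸ A) →ₗ[R] I 1 := A.liftQ χbar hA with hχ
  obtain ⟨Q, hQfin, hQproj, j, hj⟩ := hq
  obtain ⟨θ, hθ⟩ := Module.Injective.out j hj χ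
  haveI : Module.Projective R Q := hQproj
  obtain ⟨θ', hθ'⟩ := Module.projective_lifting_property (d 0).hom θ hsurj
  set ψ' : B →ₗ[R] I 0 := ψ₀ - θ' ∘ₗ (j ∘ₗ A.mkQ) with hψ'
  have hrange : ∀ b, ψ' b ∈ LinearMap.range f₀ := by
    intro b
    rw [hex0, LinearMap.mem_ker]
    have h1 : (d 0).hom (θ' (j (A.mkQ b))) = θ (j (A.mkQ b)) := by
      rw [← hθ']; rfl
    have h2 : θ (j (A.mkQ b)) = χ (A.mkQ b) := hθ _
    have h3 : χ (A.mkQ b) = (d 0).hom (ψ₀ b) := by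
      simp [χ, χbar, Submodule.liftQ_apply]
    have h4 : ψ' b = ψ₀ b - θ' (j (A.mkQ b)) := rfl
    rw [h4, map_sub, h1, h2, h3, sub_self]
  let e := LinearEquiv.ofInjective f₀ hf₀
  refine ⟨e.symm.toLinearMap ∘ₗ ψ'.codRestrict (LinearMap.range f₀) hrange, fun a => ?_⟩
  have h1 : ψ' (a : B) = f₀ (φ a) := by
    have hz : A.mkQ (a : B) = 0 := (Submodule.Quotient.mk_eq_zero A).2 a.2
    have : ψ₀ (a : B) = f₀ (φ a) := hψ₀ a
    simp [ψ', hz, this]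
  have : (ψ'.codRestrict (LinearMap.range f₀) hrange) (a : B) = e (φ a) := by
    apply Subtype.ext
    simpa [e, LinearEquiv.ofInjective_apply] using h1
  simp [this]

/-- Lifting form of the extension lemma. -/
lemma ext_lifting (hR : injDimLE R R 1) {P₁ P₂ : Type} [AddCommGroup P₁] [Module R P₁]
    [AddCommGroup P₂] [Module R P₂] (d' : P₁ →ₗ[R] P₂)
    (hq : IsTorsionless R (P₂ ⧸ LinearMap.range d')) (f : P₁ →ₗ[R] R)
    (hker : LinearMap.ker d' ≤ LinearMap.ker f) :
    ∃ g : P₂ →ₗ[R] R, g ∘ₗ d' = f := by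
  let e : (P₁ ⧸ LinearMap.ker d') ≃ₗ[R] LinearMap.range d' := d'.quotKerEquivRange
  let φ : (LinearMap.range d' : Submodule R P₂) →ₗ[R] R :=
    ((LinearMap.ker d').liftQ f hker) ∘ₗ e.symm.toLinearMap
  obtain ⟨ψ, hψ⟩ := extension_lemma hR _ hq φ
  refine ⟨ψ, LinearMap.ext fun x => ?_⟩
  have h1 : ψ (d' x) = φ ⟨d' x, LinearMap.mem_range_self _ x⟩ :=
    hψ ⟨d' x, LinearMap.mem_range_self _ x⟩
  have h2 : e.symm ⟨d' x, LinearMap.mem_range_self _ x⟩ =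
      Submodule.Quotient.mk x := by
    rw [LinearEquiv.symm_apply_eq]
    exact Subtype.ext (d'.quotKerEquivRange_apply_mk x).symm
  show ψ (d' x) = f x
  rw [h1]
  show ((LinearMap.ker d').liftQ f hker) (e.symm ⟨d' x, _⟩) = f x
  rw [h2, Submodule.liftQ_apply]

/-- On a torsionless module, functionals separate points. -/
lemma exists_functional {N : Type} [AddCommGroup N] [Module R N] (h : IsTorsionless R N)
    {x : N} (hx : x ≠ 0) : ∃ f : N →ₗ[R] R, f x ≠ 0 := by
  obtain ⟨P, hfin, hproj, j, hj⟩ := h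
  haveI : Module.Finite R P := hfin
  haveI : Module.Projective R P := hproj
  obtain ⟨n, π, hπ⟩ := Module.Finite.exists_fin' R P
  obtain ⟨s, hs⟩ := Module.projective_lifting_property π LinearMap.id hπ
  have hps : ∀ p : P, π (s p) = p := fun p => by
    simpa using LinearMap.congr_fun hs p
  have hsinj : Function.Injective s := fun a b hab => by rw [← hps a, ← hps b, hab]
  have hne : s (j x) ≠ 0 := fun h0 => hx (hj (hsinj (by simpa using h0)))
  have : ∃ i, s (j x) i ≠ 0 := by
    by_contra hc
    push_neg at hc
    exact hne (funext hc)
  obtain ⟨i, hi⟩ := this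
  exact ⟨(LinearMap.proj i : (Fin n → R) →ₗ[R] R) ∘ₗ (s ∘ₗ j), by simpa using hi⟩

/-- Expansion of a functional on a finite free module. -/
lemma dual_free_expand {n : ℕ} (g : (Fin n → R) →ₗ[R] R) (y : Fin n → R) :
    g y = ∑ i, y i * g (Pi.single i 1) := by
  have hy : y = ∑ i, (y i) • (Pi.single i (1 : R) : Fin n → R) := by
    funext k
    simp [Finset.sum_apply, Pi.single_apply]
  conv_lhs => rw [hy]
  simp [map_sum, smul_eq_mul]

/-- Surjectivity of double-duality for finite free modules. -/
lemma free_dual_dual {n : ℕ} (Ψ : ((Fin n → R) →ₗ[R] R) →ₗ[Rᵐᵒᵖ] Rᵐᵒᵖ) :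
    ∃ x : Fin n → R, ∀ g : (Fin n → R) →ₗ[R] R, Ψ g = MulOpposite.op (g x) := by
  refine ⟨fun i => (Ψ (LinearMap.proj i)).unop, fun g => ?_⟩
  have hexp : g = ∑ i, (MulOpposite.op (g (Pi.single i 1))) • (LinearMap.proj i : (Fin n → R) →ₗ[R] R) := by
    apply LinearMap.ext
    intro y
    simp only [LinearMap.sum_apply, LinearMap.smul_apply, LinearMap.proj_apply]
    rw [dual_free_expand g y]
    congr 1
  conv_lhs => rw [hexp]
  rw [map_sum]
  simp only [map_smul, smul_eq_mul]
  rw [dual_free_expand g]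
  rw [show MulOpposite.op (∑ i, (Ψ (LinearMap.proj i)).unop * g (Pi.single i 1))
      = ∑ i, MulOpposite.op ((Ψ (LinearMap.proj i)).unop * g (Pi.single i 1)) from
    map_sum (MulOpposite.opAddEquiv (α := R)) _ _]
  refine Finset.sum_congr rfl fun i _ => ?_
  rw [MulOpposite.op_mul, MulOpposite.op_unop]


lemma quotKerEquivOfSurjective_apply_mk {M M₂ : Type} [AddCommGroup M] [Module R M]
    [AddCommGroup M₂] [Module R M₂] (f : M →ₗ[R] M₂) (hf : Function.Surjective f) (x : M) :
    f.quotKerEquivOfSurjective hf (Submodule.Quotient.mk x) = f x := by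
  have h := f.quotKerEquivRange_apply_mk x
  simp [LinearMap.quotKerEquivOfSurjective, LinearEquiv.trans_apply, LinearEquiv.ofTop_apply, h]

/-- The dual of a finite free module, as a map to the opposite free module. -/
def dualFreeMap (n : ℕ) : ((Fin n → R) →ₗ[R] R) →ₗ[Rᵐᵒᵖ] (Fin n → Rᵐᵒᵖ) where
  toFun f := fun i => MulOpposite.op (f (Pi.single i 1))
  map_add' f g := by funext i; simp
  map_smul' b f := by
    funext i
    simp [LinearMap.smul_apply, MulOpposite.smul_eq_mul_unop]

lemma dualFreeMap_injective (n : ℕ) : Function.Injective (dualFreeMap (R := R) n) := by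
  intro f g h
  apply LinearMap.ext
  intro y
  rw [dual_free_expand f y, dual_free_expand g y]
  refine Finset.sum_congr rfl fun i _ => ?_
  have := congrFun h i
  simp only [dualFreeMap, LinearMap.coe_mk, AddHom.coe_mk] at this
  rw [MulOpposite.op_inj.1 this]

/-- Double-dual surjectivity (reflexivity up to image) for finitely generated modules over a
ring with right self-injective dimension at most one. -/
lemma dual_dual_surj [IsNoetherianRing R] (hR' : injDimLE Rᵐᵒᵖ Rᵐᵒᵖ 1)
    {N : Type} [AddCommGroup N] [Module R N] [Module.Finite R N]
    (φ : (N →ₗ[R] R) →ₗ[Rᵐᵒᵖ] Rᵐᵒᵖ) : ∃ x : N, ∀ f : N →ₗ[R] R, φ f = MulOpposite.op (f x) := by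
  obtain ⟨n₀, q, hq⟩ := Module.Finite.exists_fin' R N
  have hfg : (LinearMap.ker q).FG := IsNoetherian.noetherian _
  obtain ⟨n₁, sgen, hsgen⟩ := Submodule.fg_iff_exists_fin_generating_family.1 hfg
  set p : (Fin n₁ → R) →ₗ[R] (Fin n₀ → R) := Fintype.linearCombination R sgen with hpdef
  have hp : LinearMap.range p = LinearMap.ker q := by
    rw [hpdef, Fintype.range_linearCombination, hsgen]
  -- dual maps
  set qs : (N →ₗ[R] R) →ₗ[Rᵐᵒᵖ] ((Fin n₀ → R) →ₗ[R] R) :=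
    { toFun := fun f => f ∘ₗ q
      map_add' := fun f g => by ext y; rfl
      map_smul' := fun b f => by ext y; rfl } with hqsdef
  set ps : ((Fin n₀ → R) →ₗ[R] R) →ₗ[Rᵐᵒᵖ] ((Fin n₁ → R) →ₗ[R] R) :=
    { toFun := fun f => f ∘ₗ p
      map_add' := fun f g => by ext y; rfl
      map_smul' := fun b f => by ext y; rfl } with hpsdef
  have hqsinj : Function.Injective qs := by
    intro f g h
    apply LinearMap.ext
    intro y
    obtain ⟨x, rfl⟩ := hq y
    exact LinearMap.congr_fun h x
  have hker : LinearMap.ker ps = LinearMap.range qs := by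
    apply le_antisymm
    · intro g hg
      rw [LinearMap.mem_ker] at hg
      have hgker : LinearMap.ker q ≤ LinearMap.ker g := by
        rw [← hp]
        rintro _ ⟨y, rfl⟩
        exact LinearMap.congr_fun hg y
      refine ⟨((LinearMap.ker q).liftQ g hgker) ∘ₗ
        (q.quotKerEquivOfSurjective hq).symm.toLinearMap, ?_⟩
      apply LinearMap.ext
      intro y
      show ((LinearMap.ker q).liftQ g hgker) ((q.quotKerEquivOfSurjective hq).symm (q y)) = g y
      have : (q.quotKerEquivOfSurjective hq).symm (q y) = Submodule.Quotient.mk y := by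
        rw [LinearEquiv.symm_apply_eq, quotKerEquivOfSurjective_apply_mk]
      rw [this, Submodule.liftQ_apply]
    · rintro _ ⟨f, rfl⟩
      rw [LinearMap.mem_ker]
      apply LinearMap.ext
      intro y
      show f (q (p y)) = 0
      have : p y ∈ LinearMap.ker q := by rw [← hp]; exact LinearMap.mem_range_self _ _
      rw [LinearMap.mem_ker.1 this, map_zero]
  have htor : IsTorsionless Rᵐᵒᵖ (((Fin n₀ → R) →ₗ[R] R) ⧸ LinearMap.range qs) := by
    refine isTorsionless_of_injective (isTorsionless_free (R := Rᵐᵒᵖ) n₁)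
      ((dualFreeMap n₁ ∘ₗ (LinearMap.range ps).subtype) ∘ₗ
        (ps.quotKerEquivRange.toLinearMap ∘ₗ
          (Submodule.quotEquivOfEq _ _ hker.symm).toLinearMap)) ?_
    refine ((dualFreeMap_injective n₁).comp (Submodule.injective_subtype _)).comp ?_
    exact ps.quotKerEquivRange.injective.comp (Submodule.quotEquivOfEq _ _ hker.symm).injective
  obtain ⟨Ψ, hΨ⟩ := extension_lemma hR' (LinearMap.range qs) htor
    (φ ∘ₗ (LinearEquiv.ofInjective qs hqsinj).symm.toLinearMap)
  obtain ⟨x₀, hx₀⟩ := free_dual_dual Ψ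
  refine ⟨q x₀, fun f => ?_⟩
  have h1 : Ψ (qs f) = φ f := by
    have h2 := hΨ ⟨qs f, LinearMap.mem_range_self _ f⟩
    rw [h2]
    show φ ((LinearEquiv.ofInjective qs hqsinj).symm ⟨qs f, _⟩) = φ f
    congr 1
    exact (LinearEquiv.ofInjective qs hqsinj).symm_apply_apply f
  rw [← h1]
  exact hx₀ (qs f)

/-- The inverse dual map: the dual of a finite free module is generated by coordinates. -/
def invDualMap (n : ℕ) : (Fin n → Rᵐᵒᵖ) →ₗ[Rᵐᵒᵖ] ((Fin n → R) →ₗ[R] R) where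
  toFun a :=
    { toFun := fun y => ∑ i, y i * (a i).unop
      map_add' := fun y z => by simp [add_mul, Finset.sum_add_distrib]
      map_smul' := fun c y => by simp [Finset.mul_sum, mul_assoc] }
  map_add' a b := LinearMap.ext fun y => by
    simp [mul_add, Finset.sum_add_distrib]
  map_smul' c a := LinearMap.ext fun y => by
    simp only [LinearMap.coe_mk, AddHom.coe_mk, RingHom.id_apply, LinearMap.smul_apply,
      MulOpposite.smul_eq_mul_unop, Pi.smul_apply, smul_eq_mul, MulOpposite.unop_mul,
      Finset.sum_mul, mul_assoc]

lemma invDualMap_surjective (n : ℕ) : Function.Surjective (invDualMap (R := R) n) := by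
  intro g
  refine ⟨fun i => MulOpposite.op (g (Pi.single i 1)), ?_⟩
  apply LinearMap.ext
  intro y
  show ∑ i, y i * g (Pi.single i 1) = g y
  rw [dual_free_expand g y]

instance dual_free_finite (n : ℕ) : Module.Finite Rᵐᵒᵖ ((Fin n → R) →ₗ[R] R) :=
  Module.Finite.of_surjective _ (invDualMap_surjective (R := R) n)

lemma dual_finite [IsNoetherianRing Rᵐᵒᵖ] {N : Type} [AddCommGroup N] [Module R N]
    [Module.Finite R N] : Module.Finite Rᵐᵒᵖ (N →ₗ[R] R) := by
  obtain ⟨n₀, q, hq⟩ := Module.Finite.exists_fin' R N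
  set qs : (N →ₗ[R] R) →ₗ[Rᵐᵒᵖ] ((Fin n₀ → R) →ₗ[R] R) :=
    { toFun := fun f => f ∘ₗ q
      map_add' := fun f g => by ext y; rfl
      map_smul' := fun b f => by ext y; rfl } with hqsdef
  have hqsinj : Function.Injective qs := by
    intro f g h
    apply LinearMap.ext
    intro y
    obtain ⟨x, rfl⟩ := hq y
    exact LinearMap.congr_fun h x
  have : Module.Finite Rᵐᵒᵖ (LinearMap.range qs) :=
    Module.Finite.iff_fg.2 (IsNoetherian.noetherian _)
  exact Module.Finite.equiv (LinearEquiv.ofInjective qs hqsinj).symm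

/-- Key step: a finitely generated torsionless module embeds into a finite free module
with torsionless cokernel. -/
lemma step_forward [IsNoetherianRing R] [IsNoetherianRing Rᵐᵒᵖ] (hR' : injDimLE Rᵐᵒᵖ Rᵐᵒᵖ 1)
    {N : Type} [AddCommGroup N] [Module R N] [Module.Finite R N] (htl : IsTorsionless R N) :
    ∃ (m : ℕ) (j : N →ₗ[R] (Fin m → R)), Function.Injective j ∧
      IsTorsionless R ((Fin m → R) ⧸ LinearMap.range j) := by
  haveI : Module.Finite Rᵐᵒᵖ (N →ₗ[R] R) := dual_finite
  obtain ⟨m, F, hF⟩ := Module.Finite.exists_fin (R := Rᵐᵒᵖ) (M := N →ₗ[R] R)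
  set j : N →ₗ[R] (Fin m → R) := LinearMap.pi F with hjdef
  -- injectivity of j
  have hjinj : Function.Injective j := by
    have hsep : ∀ x : N, j x = 0 → ∀ f : N →ₗ[R] R, f x = 0 := by
      intro x hx f
      -- evaluation at x as an Rᵐᵒᵖ-linear map
      set evx : (N →ₗ[R] R) →ₗ[Rᵐᵒᵖ] Rᵐᵒᵖ :=
        { toFun := fun f => MulOpposite.op (f x)
          map_add' := fun f g => by simp
          map_smul' := fun b f => by
            simp [LinearMap.smul_apply, MulOpposite.smul_eq_mul_unop] } with hevx
      have hle : Submodule.span Rᵐᵒᵖ (Set.range F) ≤ LinearMap.ker evx := by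
        rw [Submodule.span_le]
        rintro _ ⟨k, rfl⟩
        have : F k x = 0 := congrFun hx k
        simp [hevx, LinearMap.mem_ker, this]
      rw [hF] at hle
      have : f ∈ LinearMap.ker evx := hle Submodule.mem_top
      have := LinearMap.mem_ker.1 this
      simpa [hevx] using this
    intro a b hab
    by_contra hne
    have hsub : a - b ≠ 0 := sub_ne_zero.2 hne
    obtain ⟨f, hf⟩ := exists_functional htl hsub
    have : j (a - b) = 0 := by rw [map_sub, hab, sub_self]
    exact hf (by simpa [map_sub, sub_eq_zero] using hsep _ this f)
  -- q : free right module onto the dual of N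
  set q : (Fin m → Rᵐᵒᵖ) →ₗ[Rᵐᵒᵖ] (N →ₗ[R] R) := Fintype.linearCombination Rᵐᵒᵖ F with hqdef
  have hqsurj : Function.Surjective q := by
    rw [← LinearMap.range_eq_top, hqdef, Fintype.range_linearCombination, hF]
  -- generators of the kernel of q
  have hfg : (LinearMap.ker q).FG := IsNoetherian.noetherian _
  obtain ⟨r, G, hG⟩ := Submodule.fg_iff_exists_fin_generating_family.1 hfg
  set ρ : (Fin m → R) →ₗ[R] (Fin r → R) :=
    LinearMap.pi (fun t => ∑ k, G t k • (LinearMap.proj k : (Fin m → R) →ₗ[R] R)) with hρdef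
  have hρ : ∀ (x : Fin m → R) (t : Fin r), ρ x t = ∑ k, x k * (G t k).unop := by
    intro x t
    simp [hρdef, LinearMap.pi_apply, LinearMap.sum_apply, LinearMap.smul_apply,
      MulOpposite.smul_eq_mul_unop]
  have hranj : LinearMap.range j = LinearMap.ker ρ := by
    apply le_antisymm
    · rintro _ ⟨x, rfl⟩
      rw [LinearMap.mem_ker]
      funext t
      have hGt : G t ∈ LinearMap.ker q := by
        rw [← hG]; exact Submodule.subset_span ⟨t, rfl⟩
      have : q (G t) = 0 := LinearMap.mem_ker.1 hGt
      have h2 : (q (G t)) x = 0 := by rw [this]; rfl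
      rw [hqdef, Fintype.linearCombination_apply] at h2
      simp only [LinearMap.sum_apply, LinearMap.smul_apply,
        MulOpposite.smul_eq_mul_unop] at h2
      rw [hρ]
      show (fun t => ∑ k, j x k * (G t k).unop) t = (0 : Fin r → R) t
      simp only [hjdef, LinearMap.pi_apply]
      rw [show ∑ k, F k x * (G t k).unop = 0 from h2]
      rfl
    · intro x hx
      rw [LinearMap.mem_ker] at hx
      set Φ : (Fin m → Rᵐᵒᵖ) →ₗ[Rᵐᵒᵖ] Rᵐᵒᵖ :=
        { toFun := fun a => ∑ k, a k * MulOpposite.op (x k)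
          map_add' := fun a b => by simp [add_mul, Finset.sum_add_distrib]
          map_smul' := fun b a => by
            simp [Finset.mul_sum, mul_assoc] } with hΦdef
      have hkerΦ : LinearMap.ker q ≤ LinearMap.ker Φ := by
        rw [← hG, Submodule.span_le]
        rintro _ ⟨t, rfl⟩
        rw [SetLike.mem_coe, LinearMap.mem_ker]
        have h5 : ∀ k, G t k * MulOpposite.op (x k) = MulOpposite.op (x k * (G t k).unop) := by
          intro k
          apply MulOpposite.unop_injective
          simp
        show ∑ k, G t k * MulOpposite.op (x k) = 0
        rw [Finset.sum_congr rfl (fun k _ => h5 k)]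
        have hsum : ∑ k, MulOpposite.op (x k * (G t k).unop)
            = MulOpposite.op (∑ k, x k * (G t k).unop) :=
          (map_sum (MulOpposite.opAddEquiv (α := R)) _ _).symm
        rw [hsum]
        have h6 := congrFun hx t
        rw [hρ] at h6
        rw [show (∑ k, x k * (G t k).unop) = 0 from by simpa using h6]
        simp
      set φ : (N →ₗ[R] R) →ₗ[Rᵐᵒᵖ] Rᵐᵒᵖ :=
        ((LinearMap.ker q).liftQ Φ hkerΦ) ∘ₗ
          (q.quotKerEquivOfSurjective hqsurj).symm.toLinearMap with hφdef
      have hφq : ∀ a, φ (q a) = Φ a := by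
        intro a
        show ((LinearMap.ker q).liftQ Φ hkerΦ) ((q.quotKerEquivOfSurjective hqsurj).symm (q a)) = Φ a
        have : (q.quotKerEquivOfSurjective hqsurj).symm (q a) = Submodule.Quotient.mk a := by
          rw [LinearEquiv.symm_apply_eq, quotKerEquivOfSurjective_apply_mk]
        rw [this, Submodule.liftQ_apply]
      obtain ⟨x₀, hx₀⟩ := dual_dual_surj hR' φ
      refine ⟨x₀, ?_⟩
      funext k
      have h1 : q (Pi.single k 1) = F k := by
        rw [hqdef, Fintype.linearCombination_apply]
        simp [Pi.single_apply, ite_smul]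
      have h2 : Φ (Pi.single k 1) = MulOpposite.op (x k) := by
        show ∑ k', (Pi.single k (1:Rᵐᵒᵖ) : Fin m → Rᵐᵒᵖ) k' * MulOpposite.op (x k') = _
        simp [Pi.single_apply, ite_mul]
      have h3 : φ (F k) = MulOpposite.op (x k) := by rw [← h1, hφq, h2]
      have h4 : φ (F k) = MulOpposite.op (F k x₀) := hx₀ (F k)
      have : MulOpposite.op (F k x₀) = MulOpposite.op (x k) := by rw [← h3, h4]
      show F k x₀ = x k
      exact MulOpposite.op_inj.1 this
  -- torsionless cokernel
  refine ⟨m, j, hjinj, ?_⟩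
  refine isTorsionless_of_injective (isTorsionless_free (R := R) r)
    (((LinearMap.range ρ).subtype ∘ₗ ρ.quotKerEquivRange.toLinearMap) ∘ₗ
      (Submodule.quotEquivOfEq _ _ hranj).toLinearMap) ?_
  refine ((Submodule.injective_subtype _).comp ρ.quotKerEquivRange.injective).comp
    (Submodule.quotEquivOfEq _ _ hranj).injective

end Tools

/-- Auxiliary structure: a finitely generated torsionless module. -/
structure TLMod (Γ : Type) [Ring Γ] where
  N : ModuleCat.{0} Γ
  fin : Module.Finite Γ N
  tor : IsTorsionless Γ N

section Construct

variable {Γ : Type} [Ring Γ]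
variable (hF : ∀ X : TLMod Γ, ∃ (m : ℕ) (j : (X.N : Type) →ₗ[Γ] (Fin m → Γ)),
    Function.Injective j ∧ IsTorsionless Γ ((Fin m → Γ) ⧸ LinearMap.range j))
variable (hB : ∀ X : TLMod Γ, ∃ (m : ℕ) (s : (Fin m → Γ) →ₗ[Γ] (X.N : Type)),
    Function.Surjective s)

noncomputable def mF (X : TLMod Γ) : ℕ := (hF X).choose

noncomputable def jF (X : TLMod Γ) : (X.N : Type) →ₗ[Γ] (Fin (mF hF X) → Γ) :=
  (hF X).choose_spec.choose

lemma jF_inj (X : TLMod Γ) : Function.Injective (jF hF X) :=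
  (hF X).choose_spec.choose_spec.1

lemma jF_tor (X : TLMod Γ) :
    IsTorsionless Γ ((Fin (mF hF X) → Γ) ⧸ LinearMap.range (jF hF X)) :=
  (hF X).choose_spec.choose_spec.2

noncomputable def mB (X : TLMod Γ) : ℕ := (hB X).choose

noncomputable def sB (X : TLMod Γ) : (Fin (mB hB X) → Γ) →ₗ[Γ] (X.N : Type) :=
  (hB X).choose_spec.choose

lemma sB_surj (X : TLMod Γ) : Function.Surjective (sB hB X) :=
  (hB X).choose_spec.choose_spec

noncomputable def succF (X : TLMod Γ) : TLMod Γ :=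
  ⟨ModuleCat.of Γ ((Fin (mF hF X) → Γ) ⧸ LinearMap.range (jF hF X)),
    Module.Finite.of_surjective _ (Submodule.mkQ_surjective _), jF_tor hF X⟩

noncomputable def succB [IsNoetherianRing Γ] (X : TLMod Γ) : TLMod Γ :=
  ⟨ModuleCat.of Γ (LinearMap.ker (sB hB X)),
    Module.Finite.iff_fg.2 (IsNoetherian.noetherian _),
    isTorsionless_of_injective (isTorsionless_free _) (Submodule.subtype _)
      (Submodule.injective_subtype _)⟩

noncomputable def seqF (X₀ : TLMod Γ) : ℕ → TLMod Γ
  | 0 => X₀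
  | n+1 => succF hF (seqF X₀ n)

noncomputable def seqB [IsNoetherianRing Γ] (X₀ : TLMod Γ) : ℕ → TLMod Γ
  | 0 => X₀
  | n+1 => succB hB (seqB X₀ n)

variable [IsNoetherianRing Γ]

noncomputable def PP (X₀ : TLMod Γ) : ℤ → ModuleCat.{0} Γ
  | .ofNat n => ModuleCat.of Γ (Fin (mF hF (seqF hF X₀ n)) → Γ)
  | .negSucc n => ModuleCat.of Γ (Fin (mB hB (seqB hB X₀ n)) → Γ)

noncomputable def dd (X₀ : TLMod Γ) : ∀ i : ℤ, (PP hF hB X₀ i ⟶ PP hF hB X₀ (i+1))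
  | .ofNat n =>
      ModuleCat.ofHom ((jF hF (seqF hF X₀ (n+1))) ∘ₗ (LinearMap.range (jF hF (seqF hF X₀ n))).mkQ)
  | .negSucc 0 => ModuleCat.ofHom ((jF hF (seqF hF X₀ 0)) ∘ₗ (sB hB (seqB hB X₀ 0)))
  | .negSucc (n+1) =>
      ModuleCat.ofHom ((LinearMap.ker (sB hB (seqB hB X₀ n))).subtype ∘ₗ (sB hB (seqB hB X₀ (n+1))))

lemma dd_exact (X₀ : TLMod Γ) (i : ℤ) :
    LinearMap.range (dd hF hB X₀ i).hom = LinearMap.ker (dd hF hB X₀ (i+1)).hom := by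
  match i with
  | .ofNat n =>
    show LinearMap.range ((jF hF (seqF hF X₀ (n+1))) ∘ₗ (LinearMap.range (jF hF (seqF hF X₀ n))).mkQ)
      = LinearMap.ker ((jF hF (seqF hF X₀ (n+2))) ∘ₗ (LinearMap.range (jF hF (seqF hF X₀ (n+1)))).mkQ)
    erw [LinearMap.range_comp_of_range_eq_top _
        (LinearMap.range_eq_top.2 (Submodule.mkQ_surjective _)),
      LinearMap.ker_comp_of_ker_eq_bot _ (LinearMap.ker_eq_bot.2 (jF_inj hF _)),
      Submodule.ker_mkQ]
    rfl
  | .negSucc 0 =>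
    show LinearMap.range ((jF hF (seqF hF X₀ 0)) ∘ₗ (sB hB (seqB hB X₀ 0)))
      = LinearMap.ker ((jF hF (seqF hF X₀ 1)) ∘ₗ (LinearMap.range (jF hF (seqF hF X₀ 0))).mkQ)
    erw [LinearMap.range_comp_of_range_eq_top (jF hF (seqF hF X₀ 0))
        (LinearMap.range_eq_top.2 (sB_surj hB (seqB hB X₀ 0))),
      LinearMap.ker_comp_of_ker_eq_bot _ (LinearMap.ker_eq_bot.2 (jF_inj hF _)),
      Submodule.ker_mkQ]
  | .negSucc 1 =>
    show LinearMap.range ((LinearMap.ker (sB hB (seqB hB X₀ 0))).subtype ∘ₗ (sB hB (seqB hB X₀ 1)))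
      = LinearMap.ker ((jF hF (seqF hF X₀ 0)) ∘ₗ (sB hB (seqB hB X₀ 0)))
    erw [LinearMap.range_comp_of_range_eq_top (LinearMap.ker (sB hB (seqB hB X₀ 0))).subtype
        (LinearMap.range_eq_top.2 (sB_surj hB (seqB hB X₀ 1))),
      LinearMap.ker_comp_of_ker_eq_bot _ (LinearMap.ker_eq_bot.2 (jF_inj hF _)),
      Submodule.range_subtype]
    rfl
  | .negSucc (n+2) =>
    show LinearMap.range ((LinearMap.ker (sB hB (seqB hB X₀ (n+1)))).subtype ∘ₗ (sB hB (seqB hB X₀ (n+2))))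
      = LinearMap.ker ((LinearMap.ker (sB hB (seqB hB X₀ n))).subtype ∘ₗ (sB hB (seqB hB X₀ (n+1))))
    erw [LinearMap.range_comp_of_range_eq_top (LinearMap.ker (sB hB (seqB hB X₀ (n+1)))).subtype
        (LinearMap.range_eq_top.2 (sB_surj hB (seqB hB X₀ (n+2)))),
      LinearMap.ker_comp_of_ker_eq_bot _
        (LinearMap.ker_eq_bot.2 (Submodule.injective_subtype _)),
      Submodule.range_subtype]
    rfl

lemma dd_quot_tor (X₀ : TLMod Γ) (i : ℤ) :
    IsTorsionless Γ ((PP hF hB X₀ (i+1) : Type) ⧸ LinearMap.range (dd hF hB X₀ i).hom) := by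
  match i with
  | .ofNat n =>
    show IsTorsionless Γ ((Fin (mF hF (seqF hF X₀ (n+1))) → Γ) ⧸
      LinearMap.range ((jF hF (seqF hF X₀ (n+1))) ∘ₗ (LinearMap.range (jF hF (seqF hF X₀ n))).mkQ))
    have h : LinearMap.range ((jF hF (seqF hF X₀ (n+1))) ∘ₗ (LinearMap.range (jF hF (seqF hF X₀ n))).mkQ) = LinearMap.range (jF hF (seqF hF X₀ (n+1))) :=
      LinearMap.range_comp_of_range_eq_top _
        (LinearMap.range_eq_top.2 (Submodule.mkQ_surjective _))
    exact isTorsionless_of_injective (jF_tor hF (seqF hF X₀ (n+1)))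
      (Submodule.quotEquivOfEq _ _ h).toLinearMap (Submodule.quotEquivOfEq _ _ h).injective
  | .negSucc 0 =>
    show IsTorsionless Γ ((Fin (mF hF (seqF hF X₀ 0)) → Γ) ⧸
      LinearMap.range ((jF hF (seqF hF X₀ 0)) ∘ₗ (sB hB (seqB hB X₀ 0))))
    have h : LinearMap.range ((jF hF (seqF hF X₀ 0)) ∘ₗ (sB hB (seqB hB X₀ 0))) = LinearMap.range (jF hF (seqF hF X₀ 0)) :=
      LinearMap.range_comp_of_range_eq_top (jF hF (seqF hF X₀ 0))
        (LinearMap.range_eq_top.2 (sB_surj hB (seqB hB X₀ 0)))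
    exact isTorsionless_of_injective (jF_tor hF (seqF hF X₀ 0))
      (Submodule.quotEquivOfEq _ _ h).toLinearMap (Submodule.quotEquivOfEq _ _ h).injective
  | .negSucc (n+1) =>
    show IsTorsionless Γ ((Fin (mB hB (seqB hB X₀ n)) → Γ) ⧸
      LinearMap.range ((LinearMap.ker (sB hB (seqB hB X₀ n))).subtype ∘ₗ (sB hB (seqB hB X₀ (n+1)))))
    have h : LinearMap.range ((LinearMap.ker (sB hB (seqB hB X₀ n))).subtype ∘ₗ (sB hB (seqB hB X₀ (n+1))))
        = LinearMap.ker (sB hB (seqB hB X₀ n)) := by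
      erw [LinearMap.range_comp_of_range_eq_top (LinearMap.ker (sB hB (seqB hB X₀ n))).subtype
          (LinearMap.range_eq_top.2 (sB_surj hB (seqB hB X₀ (n+1)))), Submodule.range_subtype]
    have e := (Submodule.quotEquivOfEq _ _ h).trans
      ((sB hB (seqB hB X₀ n)).quotKerEquivOfSurjective (sB_surj hB _))
    exact isTorsionless_of_injective ((seqB hB X₀ n).tor) e.toLinearMap e.injective

end Construct

lemma backward_direction {Γ : Type} [Ring Γ] [IsNoetherianRing Γ] [IsNoetherianRing Γᵐᵒᵖ]
    (hleft : injDimLE Γ Γ 1) (hright : injDimLE Γᵐᵒᵖ Γᵐᵒᵖ 1)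
    (M : Type) [AddCommGroup M] [Module Γ M] [Module.Finite Γ M]
    (htl : IsTorsionless Γ M) : IsGorensteinProjective Γ M := by
  have hF : ∀ X : TLMod Γ, ∃ (m : ℕ) (j : (X.N : Type) →ₗ[Γ] (Fin m → Γ)),
      Function.Injective j ∧ IsTorsionless Γ ((Fin m → Γ) ⧸ LinearMap.range j) := by
    intro X
    haveI := X.fin
    exact step_forward hright X.tor
  have hB : ∀ X : TLMod Γ, ∃ (m : ℕ) (s : (Fin m → Γ) →ₗ[Γ] (X.N : Type)),
      Function.Surjective s := by
    intro X
    haveI := X.fin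
    exact Module.Finite.exists_fin' Γ X.N
  let X₀ : TLMod Γ := ⟨ModuleCat.of Γ M, ‹Module.Finite Γ M›, htl⟩
  refine ⟨PP hF hB X₀, dd hF hB X₀, ?_, ?_, dd_exact hF hB X₀, ?_, ?_⟩
  · intro i
    cases i with
    | ofNat n => exact inferInstanceAs (Module.Finite Γ (Fin (mF hF (seqF hF X₀ n)) → Γ))
    | negSucc n => exact inferInstanceAs (Module.Finite Γ (Fin (mB hB (seqB hB X₀ n)) → Γ))
  · intro i
    cases i with
    | ofNat n => exact inferInstanceAs (Module.Projective Γ (Fin (mF hF (seqF hF X₀ n)) → Γ))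
    | negSucc n => exact inferInstanceAs (Module.Projective Γ (Fin (mB hB (seqB hB X₀ n)) → Γ))
  · intro i f hf
    have hker : LinearMap.ker (dd hF hB X₀ (i+1)).hom ≤ LinearMap.ker f := by
      rw [← dd_exact hF hB X₀ i]
      rintro _ ⟨x, rfl⟩
      rw [LinearMap.mem_ker]
      exact LinearMap.congr_fun hf x
    exact ext_lifting hleft (dd hF hB X₀ (i+1)).hom (dd_quot_tor hF hB X₀ (i+1)) f hker
  · constructor
    have hk : LinearMap.ker (dd hF hB X₀ 0).hom = LinearMap.range (jF hF (seqF hF X₀ 0)) := by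
      show LinearMap.ker ((jF hF (seqF hF X₀ 1)) ∘ₗ (LinearMap.range (jF hF (seqF hF X₀ 0))).mkQ) = _
      erw [LinearMap.ker_comp_of_ker_eq_bot _ (LinearMap.ker_eq_bot.2 (jF_inj hF _)),
        Submodule.ker_mkQ]
    exact (LinearEquiv.ofInjective (jF hF (seqF hF X₀ 0)) (jF_inj hF _)).trans
      (LinearEquiv.ofEq _ _ hk.symm)

/-- For a `1`-Gorenstein finite-dimensional algebra `Γ`, a finitely generated module is
Gorenstein projective iff it is torsionless. -/
theorem gorensteinProjective_iff_torsionless_of_oneGorenstein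
    (K Γ : Type) [Field K] [Ring Γ] [Algebra K Γ] [FiniteDimensional K Γ]
    (hleft : injDimLE Γ Γ 1) (hright : injDimLE Γᵐᵒᵖ Γᵐᵒᵖ 1)
    (M : Type) [AddCommGroup M] [Module Γ M] [Module.Finite Γ M] :
    IsGorensteinProjective Γ M ↔ IsTorsionless Γ M := by
  constructor
  · rintro ⟨P, d, hfin, hproj, hex, hlift, ⟨e⟩⟩
    exact ⟨P 0, hfin 0, hproj 0, (LinearMap.ker (d 0).hom).subtype ∘ₗ e.toLinearMap,
      (Submodule.injective_subtype _).comp e.injective⟩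
  · intro htl
    haveI : IsNoetherianRing Γ := isNoetherian_of_tower K inferInstance
    haveI : IsNoetherianRing Γᵐᵒᵖ := isNoetherian_of_tower K inferInstance
    exact backward_direction hleft hright M htl
end

section
/- Let Λ be a d-Gorenstein finite-dimensional algebra. Then a finitely generated Λ-module G is Gorenstein projective if and only if there exists an exact sequence 0 → G → P^0 → P^1 → P^2 → ··· with each P^i finitely generated projective. -/
open CategoryTheory

section Aux
variable {Λ : Type} [Ring Λ]

/-- Factor a map vanishing on the kernel through (a submodule equal to) the range. -/
lemma factor_thru {A B X : Type} [AddCommGroup A] [Module Λ A] [AddCommGroup B] [Module Λ B]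
    [AddCommGroup X] [Module Λ X] (dAB : A →ₗ[Λ] B) (N : Submodule Λ B)
    (hN : LinearMap.range dAB = N) (f : A →ₗ[Λ] X) (hf : ∀ a, dAB a = 0 → f a = 0) :
    ∃ u : N →ₗ[Λ] X, ∀ (a : A) (h : dAB a ∈ N), u ⟨dAB a, h⟩ = f a := by
  subst hN
  have hker : LinearMap.ker dAB ≤ LinearMap.ker f := fun a ha => hf a ha
  refine ⟨(LinearMap.ker dAB).liftQ f hker ∘ₗ (dAB.quotKerEquivRange).symm.toLinearMap,
    fun a h => ?_⟩
  have h1 : (dAB.quotKerEquivRange).symm ⟨dAB a, h⟩ = Submodule.Quotient.mk a :=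
    dAB.quotKerEquivRange_symm_apply_image a h
  simp [h1]

/-- Key lemma: maps from a kernel in an exact-to-the-right complex of projectives into a module
of finite injective dimension extend to the whole projective. -/
lemma ext_lift : ∀ (e : ℕ) (X : Type) [AddCommGroup X] [Module Λ X], injDimLE Λ X e →
    ∀ (P : ℤ → ModuleCat.{0} Λ) (δ : ∀ i, P i ⟶ P (i + 1)),
    (∀ i, Module.Projective Λ (P i)) →
    (∀ i, LinearMap.range (δ i).hom = LinearMap.ker (δ (i + 1)).hom) →
    ∀ (i₀ : ℤ) (f : LinearMap.ker (δ i₀).hom →ₗ[Λ] X),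
    ∃ g : P i₀ →ₗ[Λ] X, ∀ x : LinearMap.ker (δ i₀).hom, g x = f x := by
  intro e
  induction e with
  | zero =>
    intro X _ _ hX P δ hproj hex i₀ f
    obtain ⟨I, ι, dI, hinj, hιinj, h0, hexI, hsub⟩ := hX
    have hsub1 : Subsingleton (I 1) := hsub 0 le_rfl
    have hιsurj : Function.Surjective ι := by
      rw [← LinearMap.range_eq_top, h0]
      rw [LinearMap.ker_eq_top.mpr (by ext x; exact Subsingleton.elim _ _)]
    let eι : X ≃ₗ[Λ] I 0 := LinearEquiv.ofBijective ι ⟨hιinj, hιsurj⟩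
    obtain ⟨h, hh⟩ := (hinj 0).out (LinearMap.ker (δ i₀).hom).subtype
      (Submodule.injective_subtype _) (eι.toLinearMap ∘ₗ f)
    exact ⟨eι.symm.toLinearMap ∘ₗ h, fun x => by
      have := hh x
      simp only [Submodule.coe_subtype] at this
      simp [this, eι]⟩
  | succ n ih =>
    intro X _ _ hX P δ hproj hex i₀ f
    obtain ⟨I, ι, dI, hinj, hιinj, h0, hexI, hsub⟩ := hX
    -- the cosyzygy X' of X
    set X' := LinearMap.ker (dI 1).hom with hX'
    let π : I 0 →ₗ[Λ] X' :=
      (LinearEquiv.ofEq _ _ (hexI 0)).toLinearMap ∘ₗ (dI 0).hom.rangeRestrict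
    have hπsurj : Function.Surjective π := by
      intro y
      obtain ⟨x, hx⟩ := (LinearEquiv.ofEq _ _ (hexI 0)).symm y |>.2
      exact ⟨x, by apply Subtype.ext; simpa [π, LinearMap.rangeRestrict] using hx⟩
    have hπker : ∀ z : I 0, π z = 0 ↔ z ∈ LinearMap.range ι := by
      intro z
      rw [h0]
      constructor
      · intro hz
        have : (dI 0).hom z = 0 := congrArg Subtype.val hz
        exact this
      · intro hz
        exact Subtype.ext (by simpa [π, LinearMap.rangeRestrict] using hz)
    have hX'dim : injDimLE Λ X' n := by
      refine ⟨fun k => I (k + 1), (LinearMap.ker (dI 1).hom).subtype, fun k => dI (k + 1),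
        fun k => hinj (k + 1), Submodule.injective_subtype _, ?_, fun k => hexI (k + 1),
        fun k hk => hsub (k + 1) (by omega)⟩
      rw [Submodule.range_subtype]
    -- step 1: extend ι ∘ f to h : P i₀ → I 0
    obtain ⟨h, hh⟩ := (hinj 0).out (LinearMap.ker (δ i₀).hom).subtype
      (Submodule.injective_subtype _) (ι ∘ₗ f)
    -- step 2: factor π ∘ h through ker (δ (i₀+1))
    obtain ⟨u, hu⟩ := factor_thru (δ i₀).hom (LinearMap.ker (δ (i₀ + 1)).hom) (hex i₀)
      (π ∘ₗ h) (fun a ha => by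
        have hmem : a ∈ LinearMap.ker (δ i₀).hom := ha
        have := hh ⟨a, hmem⟩
        simp only [Submodule.coe_subtype, LinearMap.comp_apply] at this ⊢
        rw [this]
        exact (hπker _).mpr ⟨f ⟨a, hmem⟩, rfl⟩)
    -- step 3: extend u by induction
    obtain ⟨v, hv⟩ := ih X' hX'dim P δ hproj hex (i₀ + 1) u
    -- step 4: lift v along π
    obtain ⟨v', hv'⟩ := Module.projective_lifting_property (h := hproj (i₀ + 1)) π v hπsurj
    -- g₀ := h - v' ∘ δ i₀ lands in range ι
    have hrange : ∀ x : P i₀, (h - v' ∘ₗ (δ i₀).hom) x ∈ LinearMap.range ι := by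
      intro x
      rw [← hπker]
      have h1 : v ((δ i₀).hom x) = π (h x) := by
        have := hv ⟨(δ i₀).hom x, by rw [← hex i₀]; exact ⟨x, rfl⟩⟩
        simp only [Submodule.coe_subtype] at this
        rw [this, hu x]
        simp
      have h2 : π (v' ((δ i₀).hom x)) = v ((δ i₀).hom x) := congrFun (congrArg DFunLike.coe hv') _
      simp only [LinearMap.sub_apply, LinearMap.comp_apply, map_sub, h2, h1, sub_self]
    let eι : X ≃ₗ[Λ] LinearMap.range ι := LinearEquiv.ofInjective ι hιinj
    refine ⟨eι.symm.toLinearMap ∘ₗ (h - v' ∘ₗ (δ i₀).hom).codRestrict _ hrange, fun x => ?_⟩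
    apply eι.injective
    simp only [LinearMap.comp_apply, LinearEquiv.coe_coe, LinearEquiv.apply_symm_apply]
    apply Subtype.ext
    have hx0 : (δ i₀).hom (x : P i₀) = 0 := x.2
    have hhx := hh x
    simp only [Submodule.coe_subtype, LinearMap.comp_apply] at hhx
    show (h - v' ∘ₗ (δ i₀).hom) ↑x = ((eι (f x)) : I 0)
    rw [LinearMap.sub_apply, LinearMap.comp_apply, hx0, map_zero, sub_zero, hhx]
    rfl

/-- A finite free cover of a module. -/
structure FreeCover (Λ : Type) [Ring Λ] where
  n : ℕ
  M : ModuleCat.{0} Λ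
  φ : (Fin n → Λ) →ₗ[Λ] M
  surj : Function.Surjective φ

/-- Choose a finite free cover of a finitely generated module. -/
noncomputable def coverOf (M : ModuleCat.{0} Λ) (h : Module.Finite Λ M) : FreeCover Λ :=
  ⟨(Module.Finite.exists_fin' Λ M).choose, M,
    (Module.Finite.exists_fin' Λ M).choose_spec.choose,
    (Module.Finite.exists_fin' Λ M).choose_spec.choose_spec⟩

/-- An iterated free resolution: at each stage, a free cover of the previous kernel. -/
noncomputable def resAux [IsNoetherian Λ Λ] (G₀ : ModuleCat.{0} Λ) (h : Module.Finite Λ G₀) :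
    ℕ → FreeCover Λ
  | 0 => coverOf G₀ h
  | k + 1 => coverOf (ModuleCat.of Λ (LinearMap.ker (resAux G₀ h k).φ))
      (inferInstance : Module.Finite Λ (LinearMap.ker (resAux G₀ h k).φ))

end Aux

/-- For a `d`-Gorenstein finite-dimensional algebra `Λ`, a finitely generated module `G` is
Gorenstein projective iff there is an exact sequence `0 → G → P⁰ → P¹ → ⋯` with all `Pⁱ`
finitely generated projective. -/


theorem gorensteinProjective_iff_coresolution
    (K Λ : Type) [Field K] [Ring Λ] [Algebra K Λ] [FiniteDimensional K Λ]
    (d : ℕ) (hleft : injDimLE Λ Λ d) (hright : injDimLE Λᵐᵒᵖ Λᵐᵒᵖ d)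
    (G : Type) [AddCommGroup G] [Module Λ G] [Module.Finite Λ G] :
    IsGorensteinProjective Λ G ↔
      ∃ (P : ℕ → ModuleCat.{0} Λ) (f : G →ₗ[Λ] P 0) (δ : ∀ k, P k ⟶ P (k + 1)),
        (∀ k, Module.Finite Λ (P k)) ∧
        (∀ k, Module.Projective Λ (P k)) ∧
        Function.Injective f ∧
        LinearMap.range f = LinearMap.ker (δ 0).hom ∧
        (∀ k, LinearMap.range (δ k).hom = LinearMap.ker (δ (k + 1)).hom) := by
  constructor
  · rintro ⟨P, dd, hfin, hproj, hex, -, ⟨e⟩⟩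
    refine ⟨fun k => P (k : ℤ), (LinearMap.ker (dd 0).hom).subtype ∘ₗ e.toLinearMap,
      fun k => dd (k : ℤ), fun k => hfin _, fun k => hproj _,
      (Submodule.injective_subtype _).comp e.injective, ?_, fun k => hex (k : ℤ)⟩
    rw [LinearMap.range_comp, LinearEquiv.range, Submodule.map_top, Submodule.range_subtype]
    rfl
  · rintro ⟨P, f, δ, hfin, hproj, hfinj, hfr, hex⟩
    haveI : IsNoetherian Λ Λ := by
      have h1 : IsNoetherian K Λ := IsNoetherian.iff_fg.mpr inferInstance
      exact isNoetherian_of_tower K h1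
    set R : ℕ → FreeCover Λ := resAux (ModuleCat.of Λ G) ‹Module.Finite Λ G› with hR
    let Q : ℕ → ModuleCat.{0} Λ := fun k => ModuleCat.of Λ (Fin (R k).n → Λ)
    let P' : ℤ → ModuleCat.{0} Λ := fun i => match i with
      | .ofNat n => P n
      | .negSucc n => Q n
    let d' : ∀ i, P' i ⟶ P' (i + 1) := fun i => match i with
      | .ofNat n => δ n
      | .negSucc 0 => ModuleCat.ofHom (f ∘ₗ (R 0).φ)
      | .negSucc (n + 1) => ModuleCat.ofHom ((LinearMap.ker (R n).φ).subtype ∘ₗ (R (n + 1)).φ)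
    have hex' : ∀ i, LinearMap.range (d' i).hom = LinearMap.ker (d' (i + 1)).hom := by
      intro i
      match i with
      | .ofNat n => exact hex n
      | .negSucc 0 =>
        show LinearMap.range (f ∘ₗ (R 0).φ) = LinearMap.ker (δ 0).hom
        erw [LinearMap.range_comp, LinearMap.range_eq_top.mpr (R 0).surj, Submodule.map_top, hfr]
      | .negSucc 1 =>
        show LinearMap.range ((LinearMap.ker (R 0).φ).subtype ∘ₗ (R 1).φ)
          = LinearMap.ker (f ∘ₗ (R 0).φ)
        erw [LinearMap.range_comp, LinearMap.range_eq_top.mpr (R 1).surj, Submodule.map_top,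
          Submodule.range_subtype, LinearMap.ker_comp, LinearMap.ker_eq_bot.mpr hfinj,
          Submodule.comap_bot]
        rfl
      | .negSucc (n + 2) =>
        show LinearMap.range ((LinearMap.ker (R (n + 1)).φ).subtype ∘ₗ (R (n + 2)).φ)
          = LinearMap.ker ((LinearMap.ker (R n).φ).subtype ∘ₗ (R (n + 1)).φ)
        erw [LinearMap.range_comp, LinearMap.range_eq_top.mpr (R (n + 2)).surj, Submodule.map_top,
          Submodule.range_subtype, LinearMap.ker_comp, Submodule.ker_subtype,
          Submodule.comap_bot]
        rfl
    refine ⟨P', d', fun i => ?_, fun i => ?_, hex', fun i f0 hf0 => ?_, ?_⟩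
    · match i with
      | .ofNat n => exact hfin n
      | .negSucc n => exact inferInstanceAs (Module.Finite Λ (Fin (R n).n → Λ))
    · match i with
      | .ofNat n => exact hproj n
      | .negSucc n => exact inferInstanceAs (Module.Projective Λ (Fin (R n).n → Λ))
    · obtain ⟨u, hu⟩ := factor_thru (d' (i + 1)).hom (LinearMap.ker (d' (i + 1 + 1)).hom)
        (hex' (i + 1)) f0 (fun a ha => by
          have : a ∈ LinearMap.ker (d' (i + 1)).hom := ha
          rw [← hex' i] at this
          obtain ⟨b, rfl⟩ := this
          exact congrFun (congrArg DFunLike.coe hf0) b)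
      obtain ⟨g, hg⟩ := ext_lift d Λ hleft P' d'
        (by intro j
            match j with
            | .ofNat n => exact hproj n
            | .negSucc n => exact inferInstanceAs (Module.Projective Λ (Fin (R n).n → Λ)))
        hex' (i + 1 + 1) u
      refine ⟨g, ?_⟩
      ext a
      have hmem : (d' (i + 1)).hom a ∈ LinearMap.ker (d' (i + 1 + 1)).hom := by
        rw [← hex' (i + 1)]; exact ⟨a, rfl⟩
      have := hg ⟨(d' (i + 1)).hom a, hmem⟩
      simp only [LinearMap.comp_apply]
      rw [this, hu a hmem]
    · exact ⟨(LinearEquiv.ofInjective f hfinj).trans (LinearEquiv.ofEq _ _ hfr)⟩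
end
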